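/- Let p > 3 be a prime and let d be a nonzero rational number that is a p-adic unit. Then ∑_{k=0}^{p−1} (1 + ((16−d)/3)k² + ((32+d)/6)k) · C(4k,2k)/d^k ≡ (−64/d)^{p−1} p((2p−1)(1 − 6p·q_p(2)) − 21p² q_p(2)²) (mod p⁴), where the congruence means the difference divided by p⁴ is a p-adic integer. -/

import Mathlib

open Finset

lemma prod_one_add_of_sq_zero {R : Type*} [CommRing R] (c : R) (hc : c * c = 0)
    (b : ℕ → R) (n : ℕ) :
    ∏ k ∈ range n, (1 + c * b k) = 1 + c * ∑ k ∈ range n, b k := by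
  induction n with
  | zero => simp
  | succ n ih =>
    rw [prod_range_succ, sum_range_succ, ih]
    ring_nf
    rw [show c ^ 2 = c * c from sq c, hc]
    ring

lemma split_fact (m : ℕ) (q : ℕ) :
    ∏ i ∈ range (2 * (m + 1)), (q + i + 1)
      = (q + m + 1) * (q + 2 * m + 2) *
        ((∏ i ∈ range m, (q + i + 1)) * ∏ i ∈ range m, (q + 2 * (m + 1) - (i + 1))) := by
  rw [show 2 * (m + 1) = (m + 1) + (m + 1) by ring, Finset.prod_range_add]
  rw [Finset.prod_range_succ, Finset.prod_range_succ]
  have h4 : ∏ i ∈ range m, (q + (m + 1 + i) + 1) = ∏ i ∈ range m, (q + (m + 1 + (m + 1)) - (i + 1)) := by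
    rw [← Finset.prod_range_reflect]
    exact Finset.prod_congr rfl fun i hi => by
      simp only [Finset.mem_range] at hi; omega
  rw [h4, show q + (m + 1 + m) + 1 = q + 2 * m + 2 by ring]
  ring

lemma fact_eq_A (m : ℕ) :
    (2 * (m + 1)).factorial
      = 2 * (m + 1) ^ 2 * ∏ k ∈ range m, ((k + 1) * (2 * (m + 1) - (k + 1))) := by
  have h1 : (2 * (m + 1)).factorial = ∏ i ∈ range (2 * (m + 1)), (0 + i + 1) := by
    rw [← Finset.prod_range_add_one_eq_factorial]
    exact Finset.prod_congr rfl fun i _ => by omega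
  rw [h1, split_fact, ← Finset.prod_mul_distrib]
  simp only [Nat.zero_add]
  ring

lemma fact4_eq (m : ℕ) :
    (4 * (m + 1)).factorial = (2 * (m + 1)).factorial *
      (12 * (m + 1) ^ 2 * ∏ k ∈ range m, ((2 * (m + 1) + (k + 1)) * (4 * (m + 1) - (k + 1)))) := by
  have h1 : (4 * (m + 1)).factorial = ∏ i ∈ range (2 * (m + 1) + 2 * (m + 1)), (i + 1) := by
    rw [Finset.prod_range_add_one_eq_factorial]; congr 1; ring
  rw [h1, Finset.prod_range_add, Finset.prod_range_add_one_eq_factorial]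
  congr 1
  have h2 : ∏ i ∈ range (2 * (m + 1)), (2 * (m + 1) + i + 1)
      = (2 * (m + 1) + m + 1) * (2 * (m + 1) + 2 * m + 2) *
        ((∏ i ∈ range m, (2 * (m + 1) + i + 1)) *
          ∏ i ∈ range m, (2 * (m + 1) + 2 * (m + 1) - (i + 1))) := split_fact m (2 * (m + 1))
  rw [h2]
  have h3 : ∏ i ∈ range m, (2 * (m + 1) + 2 * (m + 1) - (i + 1))
      = ∏ i ∈ range m, (4 * (m + 1) - (i + 1)) :=
    Finset.prod_congr rfl fun i hi => by omega
  rw [h3, ← Finset.prod_mul_distrib]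
  have h4 : ∀ i ∈ range m, (2 * (m + 1) + i + 1) * (4 * (m + 1) - (i + 1))
      = (2 * (m + 1) + (i + 1)) * (4 * (m + 1) - (i + 1)) := fun i _ => by
    congr 1
  rw [Finset.prod_congr rfl h4]
  have h5 : 2 * (m + 1) + m + 1 = 3 * (m + 1) := by ring
  have h6 : 2 * (m + 1) + 2 * m + 2 = 4 * (m + 1) := by ring
  rw [h5, h6]
  ring

lemma J1 (m : ℕ) :
    (4 * (m + 1)).choose (2 * (m + 1)) *
        (2 * ∏ k ∈ range m, ((k + 1) * (2 * (m + 1) - (k + 1))))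
      = 12 * ∏ k ∈ range m, ((2 * (m + 1) + (k + 1)) * (4 * (m + 1) - (k + 1))) := by
  set p := m + 1
  set A := ∏ k ∈ range m, ((k + 1) * (2 * p - (k + 1))) with hA
  set B := ∏ k ∈ range m, ((2 * p + (k + 1)) * (4 * p - (k + 1))) with hB
  have hch : (4 * p).choose (2 * p) * (2 * p).factorial * (2 * p).factorial
      = (4 * p).factorial := by
    have := Nat.choose_mul_factorial_mul_factorial (show 2 * p ≤ 4 * p by omega)
    rwa [show 4 * p - 2 * p = 2 * p by omega] at this
  have key : (4 * p).choose (2 * p) * (2 * p).factorial = 12 * p ^ 2 * B := by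
    have h := hch
    rw [fact4_eq m] at h
    have hpos : 0 < (2 * p).factorial := Nat.factorial_pos _
    refine Nat.eq_of_mul_eq_mul_left hpos ?_
    calc (2 * p).factorial * ((4 * p).choose (2 * p) * (2 * p).factorial)
          = (4 * p).choose (2 * p) * (2 * p).factorial * (2 * p).factorial := by ring
        _ = (2 * p).factorial * (12 * p ^ 2 * B) := by rw [h]
  rw [fact_eq_A m] at key
  have : p ^ 2 * ((4 * p).choose (2 * p) * (2 * A)) = p ^ 2 * (12 * B) := by
    calc p ^ 2 * ((4 * p).choose (2 * p) * (2 * A))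
        = (4 * p).choose (2 * p) * (2 * p ^ 2 * A) := by ring
      _ = 12 * p ^ 2 * B := key
      _ = p ^ 2 * (12 * B) := by ring
  exact Nat.eq_of_mul_eq_mul_left (by positivity) this

lemma sum_inv_sq_zmod (p : ℕ) [Fact p.Prime] (hp : 3 < p) :
    ∑ k ∈ range (p - 1), (((k + 1 : ℕ) : ZMod p) ^ 2)⁻¹ = 0 := by
  have h0 : ∑ k ∈ range ((p - 1) + 1), (((k : ℕ) : ZMod p) ^ 2)⁻¹
      = ∑ k ∈ range (p - 1), (((k + 1 : ℕ) : ZMod p) ^ 2)⁻¹ := by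
    rw [Finset.sum_range_succ']
    simp
  rw [← h0, show p - 1 + 1 = p by omega]
  have h1 : ∑ k ∈ range p, (((k : ℕ) : ZMod p) ^ 2)⁻¹ = ∑ x : ZMod p, (x ^ 2)⁻¹ := by
    refine Finset.sum_nbij' (fun k => ((k : ℕ) : ZMod p)) (fun x => x.val) ?_ ?_ ?_ ?_ ?_
    · intro a _; exact Finset.mem_univ _
    · intro x _
      simp only [Finset.mem_range]
      exact ZMod.val_lt x
    · intro a ha
      simp only [Finset.mem_range] at ha
      exact ZMod.val_cast_of_lt ha
    · intro x _
      exact ZMod.natCast_zmod_val x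
    · intro a _; rfl
  rw [h1]
  have h2 : ∀ x : ZMod p, (x ^ 2)⁻¹ = x ^ (p - 3) := by
    intro x
    rcases eq_or_ne x 0 with rfl | hx
    · rw [zero_pow (by omega), zero_pow (by omega), inv_zero]
    · have hx1 : x ^ (p - 1) = 1 := ZMod.pow_card_sub_one_eq_one hx
      have : x ^ (p - 3) * x ^ 2 = 1 := by
        rw [← pow_add, show p - 3 + 2 = p - 1 by omega]; exact hx1
      exact (eq_inv_of_mul_eq_one_right ((mul_comm _ _).trans this)).symm
  simp only [h2]
  have := FiniteField.sum_pow_lt_card_sub_one (ZMod p) (p - 3)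
    (by rw [ZMod.card]; omega)
  exact this

theorem jacobsthal (p : ℕ) [Fact p.Prime] (hp : 3 < p) :
    (((4 * p).choose (2 * p) : ℕ) : ZMod (p ^ 3)) = 6 := by
  obtain ⟨m, rfl⟩ : ∃ m, p = m + 1 := ⟨p - 1, by omega⟩
  set p := m + 1 with hpdef
  haveI : NeZero (p ^ 3) := ⟨by positivity⟩
  have hprime : p.Prime := Fact.out
  set R := ZMod (p ^ 3) with hR
  -- the base factors
  set a : ℕ → R := fun k => (((k + 1) * (2 * p - (k + 1)) : ℕ) : R) with ha
  have hndvd : ∀ k, k < m → ¬ p ∣ (k + 1) := by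
    intro k hk hdvd
    have := Nat.le_of_dvd (by omega) hdvd
    omega
  have hndvd2 : ∀ k, k < m → ¬ p ∣ (2 * p - (k + 1)) := by
    intro k hk hdvd
    have h2p : p ∣ 2 * p := ⟨2, by ring⟩
    have := Nat.dvd_sub h2p hdvd
    rw [show 2 * p - (2 * p - (k + 1)) = k + 1 by omega] at this
    exact hndvd k hk this
  have hcop : ∀ k, k < m → Nat.Coprime ((k + 1) * (2 * p - (k + 1))) (p ^ 3) := by
    intro k hk
    refine Nat.Coprime.pow_right 3 ?_
    rw [Nat.coprime_comm]
    exact Nat.Coprime.mul_right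
      ((hprime.coprime_iff_not_dvd).2 (hndvd k hk))
      ((hprime.coprime_iff_not_dvd).2 (hndvd2 k hk))
  have hunit : ∀ k, k < m → IsUnit (a k) := fun k hk =>
    (ZMod.isUnit_iff_coprime _ _).2 (hcop k hk)
  -- p^4 = 0 in R
  have hp4 : ((p : R) ^ 2) * ((p : R) ^ 2) = 0 := by
    have : (((p ^ 4 : ℕ)) : R) = 0 := by
      rw [ZMod.natCast_eq_zero_iff]
      exact pow_dvd_pow p (by omega)
    calc ((p : R) ^ 2) * ((p : R) ^ 2) = ((p ^ 4 : ℕ) : R) := by push_cast; ring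
      _ = 0 := this
  -- B = A in R
  have hBA : ((∏ k ∈ range m, ((2 * p + (k + 1)) * (4 * p - (k + 1))) : ℕ) : R)
      = ((∏ k ∈ range m, ((k + 1) * (2 * p - (k + 1))) : ℕ) : R) := by
    rw [Nat.cast_prod, Nat.cast_prod]
    have hfac : ∀ k ∈ range m,
        (((2 * p + (k + 1)) * (4 * p - (k + 1)) : ℕ) : R)
          = a k * (1 + (p : R) ^ 2 * (8 * (a k)⁻¹)) := by
      intro k hk
      simp only [Finset.mem_range] at hk
      have hsub4 : (((4 * p - (k + 1) : ℕ)) : R) = 4 * (p : R) - ((k : R) + 1) := by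
        have : (k + 1) ≤ 4 * p := by omega
        push_cast +zetaDelta [Nat.cast_sub this]; ring
      have hsub2 : (((2 * p - (k + 1) : ℕ)) : R) = 2 * (p : R) - ((k : R) + 1) := by
        have : (k + 1) ≤ 2 * p := by omega
        push_cast +zetaDelta [Nat.cast_sub this]; ring
      have hak : a k = ((k : R) + 1) * (2 * (p : R) - ((k : R) + 1)) := by
        rw [ha]; beta_reduce; rw [Nat.cast_mul, hsub2, Nat.cast_add_one]
      have hmul : a k * (a k)⁻¹ = 1 := ZMod.mul_inv_of_unit _ (hunit k hk)
      calc (((2 * p + (k + 1)) * (4 * p - (k + 1)) : ℕ) : R)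
          = ((2 * (p:R) + ((k:R)+1)) * (4 * (p:R) - ((k:R)+1))) := by
            rw [Nat.cast_mul, hsub4]; push_cast +zetaDelta; ring
        _ = a k + 8 * (p : R) ^ 2 := by rw [hak]; ring
        _ = a k + 8 * (p : R) ^ 2 * (a k * (a k)⁻¹) := by rw [hmul]; ring
        _ = a k * (1 + (p : R) ^ 2 * (8 * (a k)⁻¹)) := by ring
    rw [Finset.prod_congr rfl hfac, Finset.prod_mul_distrib,
      prod_one_add_of_sq_zero _ hp4]
    have hW : (p : R) ^ 2 * ∑ k ∈ range m, 8 * (a k)⁻¹ = 0 := by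
      set W : R := ∑ k ∈ range m, 8 * (a k)⁻¹ with hWdef
      have hval : ((W.val : ℕ) : R) = W := ZMod.natCast_zmod_val W
      have hphi : ((W.val : ℕ) : ZMod p) = 0 := by
        have hmap : ((W.val : ℕ) : ZMod p)
            = (ZMod.castHom (dvd_pow_self p (three_ne_zero)) (ZMod p)) W := by
          conv_rhs => rw [← hval]
          rw [map_natCast]
        rw [hmap]
        set φ := ZMod.castHom (dvd_pow_self p (three_ne_zero)) (ZMod p) with hφ
        rw [hWdef, map_sum]
        have hterm : ∀ k ∈ range m, φ (8 * (a k)⁻¹)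
            = 8 * (-(((k + 1 : ℕ) : ZMod p) ^ 2))⁻¹ := by
          intro k hk
          simp only [Finset.mem_range] at hk
          have hmul : a k * (a k)⁻¹ = 1 := ZMod.mul_inv_of_unit _ (hunit k hk)
          have h1 : φ (a k) * φ ((a k)⁻¹) = 1 := by rw [← map_mul, hmul, map_one]
          have h2 : φ ((a k)⁻¹) = (φ (a k))⁻¹ := eq_inv_of_mul_eq_one_right h1
          have h3 : φ (a k) = -(((k + 1 : ℕ) : ZMod p) ^ 2) := by
            rw [ha]
            simp only [map_natCast]
            have hle : (k + 1) ≤ 2 * p := by omega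
            rw [Nat.cast_mul, Nat.cast_sub hle]
            have : ((2 * p : ℕ) : ZMod p) = 0 := by
              rw [Nat.cast_mul, ZMod.natCast_self]; ring
            rw [this]
            push_cast
            ring
          rw [map_mul, h2, h3, map_ofNat]
        rw [Finset.sum_congr rfl hterm]
        have : ∑ k ∈ range m, 8 * (-(((k + 1 : ℕ) : ZMod p) ^ 2))⁻¹
            = -8 * ∑ k ∈ range m, ((((k + 1 : ℕ) : ZMod p)) ^ 2)⁻¹ := by
          rw [Finset.mul_sum]
          refine Finset.sum_congr rfl fun k _ => ?_
          rw [inv_neg]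
          ring
        rw [this, show m = p - 1 by omega, sum_inv_sq_zmod p hp, mul_zero]
      have hdvd : p ∣ W.val := (ZMod.natCast_eq_zero_iff _ _).1 hphi
      obtain ⟨c, hc⟩ := hdvd
      calc (p : R) ^ 2 * W = ((p ^ 2 * W.val : ℕ) : R) := by
            nth_rewrite 1 [← hval]; rw [Nat.cast_mul, Nat.cast_pow]
        _ = 0 := by
            rw [ZMod.natCast_eq_zero_iff, hc]
            exact ⟨c, by ring⟩
    rw [hW, add_zero, mul_one]
  -- conclude
  have hAunit : IsUnit ((2 * ∏ k ∈ range m, ((k + 1) * (2 * p - (k + 1))) : ℕ) : R) := by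
    refine (ZMod.isUnit_iff_coprime _ _).2 ?_
    refine Nat.Coprime.pow_right 3 ?_
    rw [Nat.coprime_comm]
    refine Nat.Coprime.mul_right ((hprime.coprime_iff_not_dvd).2
      (fun h => by have := Nat.le_of_dvd (by norm_num) h; omega)) ?_
    rw [hprime.coprime_iff_not_dvd, Nat.Prime.prime hprime |>.dvd_finset_prod_iff _]
    rintro ⟨k, hk, hdvd⟩
    simp only [Finset.mem_range] at hk
    rcases (Nat.Prime.dvd_mul hprime).1 hdvd with h | h
    · exact hndvd k hk h
    · exact hndvd2 k hk h
  have hJ1 : (4 * p).choose (2 * p) *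
        (2 * ∏ k ∈ range m, ((k + 1) * (2 * p - (k + 1))))
      = 12 * ∏ k ∈ range m, ((2 * p + (k + 1)) * (4 * p - (k + 1))) := J1 m
  have hcast := congrArg (fun n : ℕ => (n : R)) hJ1
  beta_reduce at hcast; rw [Nat.cast_mul, Nat.cast_mul, Nat.cast_mul] at hcast
  rw [hBA] at hcast
  have hcastJ1 : (((4 * p).choose (2 * p) : ℕ) : R) *
      ((2 * ∏ k ∈ range m, ((k + 1) * (2 * p - (k + 1))) : ℕ) : R)
      = 6 * ((2 * ∏ k ∈ range m, ((k + 1) * (2 * p - (k + 1))) : ℕ) : R) := by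
    rw [Nat.cast_mul, hcast]
    rw [Nat.cast_ofNat, Nat.cast_ofNat]
    ring
  exact hAunit.mul_right_cancel hcastJ1

lemma choose_rec_nat (k : ℕ) :
    (4 * (k + 1)).choose (2 * (k + 1)) * ((2 * k + 1) * (2 * k + 2))
      = 4 * (4 * k + 1) * (4 * k + 3) * ((4 * k).choose (2 * k)) := by
  set C := (4 * k).choose (2 * k)
  set X1 := (4 * k + 1).choose (2 * k + 1) with hX1
  set X2 := (4 * k + 2).choose (2 * k + 2) with hX2
  set X3 := (4 * k + 3).choose (2 * k + 2) with hX3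
  set X4 := (4 * k + 4).choose (2 * k + 2) with hX4
  have c1 : (4 * k + 1) * C = X1 * (2 * k + 1) := by
    have := Nat.add_one_mul_choose_eq (4 * k) (2 * k)
    simpa [Nat.succ_eq_add_one] using this
  have c2 : (4 * k + 2) * X1 = X2 * (2 * k + 2) := by
    have := Nat.add_one_mul_choose_eq (4 * k + 1) (2 * k + 1)
    simpa [Nat.succ_eq_add_one] using this
  have c3 : X2 * (4 * k + 3) = X3 * (2 * k + 1) := by
    have := Nat.choose_mul_succ_eq (4 * k + 2) (2 * k + 2)
    rwa [show 4 * k + 2 + 1 = 4 * k + 3 by ring, show 4 * k + 3 - (2 * k + 2) = 2 * k + 1 by omega]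
      at this
  have c4 : X3 * (4 * k + 4) = X4 * (2 * k + 2) := by
    have := Nat.choose_mul_succ_eq (4 * k + 3) (2 * k + 2)
    rwa [show 4 * k + 3 + 1 = 4 * k + 4 by ring, show 4 * k + 4 - (2 * k + 2) = 2 * k + 2 by omega]
      at this
  have hgoal : (4 * (k + 1)).choose (2 * (k + 1)) = X4 := by
    rw [hX4]; congr 1 <;> ring
  rw [hgoal]
  calc X4 * ((2 * k + 1) * (2 * k + 2))
      = (X4 * (2 * k + 2)) * (2 * k + 1) := by ring
    _ = (X3 * (4 * k + 4)) * (2 * k + 1) := by rw [c4]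
    _ = (X3 * (2 * k + 1)) * (2 * (2 * k + 2)) := by ring
    _ = (X2 * (4 * k + 3)) * (2 * (2 * k + 2)) := by rw [c3]
    _ = (X2 * (2 * k + 2)) * (2 * (4 * k + 3)) := by ring
    _ = ((4 * k + 2) * X1) * (2 * (4 * k + 3)) := by rw [c2]
    _ = (X1 * (2 * k + 1)) * (4 * (4 * k + 3)) := by ring
    _ = ((4 * k + 1) * C) * (4 * (4 * k + 3)) := by rw [c1]
    _ = 4 * (4 * k + 1) * (4 * k + 3) * C := by ring

lemma choose_rec (K : Type*) [Field K] [CharZero K] (k : ℕ) :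
    (((4 * (k + 1)).choose (2 * (k + 1)) : ℕ) : K) * ((2 * (k : K) + 1) * (2 * (k : K) + 2))
      = 4 * (4 * (k : K) + 1) * (4 * (k : K) + 3) * (((4 * k).choose (2 * k) : ℕ) : K) := by
  have := congrArg (fun n : ℕ => (n : K)) (choose_rec_nat k)
  push_cast at this
  convert this using 1 <;> ring

lemma Gstep (K : Type*) [Field K] [CharZero K] (d : K) (hd : d ≠ 0) (k : ℕ) :
    (d / 6 * (((k + 1 : ℕ)) : K) * (2 * (((k + 1 : ℕ)) : K) - 1) *
        (((4 * (k + 1)).choose (2 * (k + 1)) : ℕ) : K) / d ^ (k + 1))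
      - (d / 6 * (k : K) * (2 * (k : K) - 1) * (((4 * k).choose (2 * k) : ℕ) : K) / d ^ k)
      = (1 + ((16 - d) / 3) * (k : K) ^ 2 + ((32 + d) / 6) * (k : K)) *
          (((4 * k).choose (2 * k) : ℕ) : K) / d ^ k := by
  have hrec := choose_rec K k
  have hdk : d ^ k ≠ 0 := pow_ne_zero _ hd
  set C1 := (((4 * (k + 1)).choose (2 * (k + 1)) : ℕ) : K)
  set c := (((4 * k).choose (2 * k) : ℕ) : K)
  have hcast : (((k + 1 : ℕ)) : K) = (k : K) + 1 := by push_cast; ring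
  rw [hcast]
  have hstep : d / 6 * ((k : K) + 1) * (2 * ((k : K) + 1) - 1) * C1
      = ((1 + ((16 - d) / 3) * (k : K) ^ 2 + ((32 + d) / 6) * (k : K)) * c
          + d / 6 * (k : K) * (2 * (k : K) - 1) * c) * d := by
    linear_combination (d / 12) * hrec
  rw [pow_succ, div_sub_div _ _ (mul_ne_zero hdk hd) hdk,
    div_eq_div_iff (mul_ne_zero (mul_ne_zero hdk hd) hdk) hdk]
  linear_combination (d ^ k * d ^ k) * hstep

lemma hT_bound (p : ℕ) [Fact p.Prime] (hp : 3 < p) :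
    ‖((2 : ℤ_[p]) ^ (p - 1) - 1)‖ ≤ ((p : ℝ))⁻¹ := by
  have hcast : ((2 : ℤ_[p]) ^ (p - 1) - 1) = (((2 ^ (p - 1) - 1 : ℤ)) : ℤ_[p]) := by
    push_cast; ring
  rw [hcast]
  have hdvd : ((p : ℤ)) ^ 1 ∣ (2 ^ (p - 1) - 1 : ℤ) := by
    rw [pow_one]
    have h2 : ((2 : ZMod p)) ≠ 0 := by
      intro h
      have : ((2 : ℕ) : ZMod p) = 0 := by exact_mod_cast h
      rw [ZMod.natCast_eq_zero_iff] at this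
      have := Nat.le_of_dvd (by norm_num) this
      omega
    have := ZMod.pow_card_sub_one_eq_one h2
    have hz : ((2 ^ (p - 1) - 1 : ℤ) : ZMod p) = 0 := by
      push_cast
      rw [this]; ring
    exact_mod_cast (ZMod.intCast_zmod_eq_zero_iff_dvd _ _).1 hz
  have := (PadicInt.norm_int_le_pow_iff_dvd (p := p) (k := 2 ^ (p - 1) - 1) (n := 1)).2 hdvd
  simpa using this

lemma hC_bound (p : ℕ) [Fact p.Prime] (hp : 3 < p)
    (hjac : (((4 * p).choose (2 * p) : ℕ) : ZMod (p ^ 3)) = 6) :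
    ‖((((4 * p).choose (2 * p) : ℕ) : ℤ_[p]) - 6)‖ ≤ ((p : ℝ))⁻¹ ^ 3 := by
  have hcast : ((((4 * p).choose (2 * p) : ℕ) : ℤ_[p]) - 6)
      = ((((4 * p).choose (2 * p) : ℤ) - 6 : ℤ) : ℤ_[p]) := by push_cast; ring
  rw [hcast]
  have hdvd : ((p : ℤ)) ^ 3 ∣ (((4 * p).choose (2 * p) : ℤ) - 6 : ℤ) := by
    have hz : ((((4 * p).choose (2 * p) : ℤ) - 6 : ℤ) : ZMod (p ^ 3)) = 0 := by
      push_cast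
      rw [hjac]; ring
    have := (ZMod.intCast_zmod_eq_zero_iff_dvd _ _).1 hz
    exact_mod_cast this
  have := (PadicInt.norm_int_le_pow_iff_dvd
    (p := p) (k := ((4 * p).choose (2 * p) : ℤ) - 6) (n := 3)).2 hdvd
  calc ‖(((((4 * p).choose (2 * p) : ℤ) - 6 : ℤ)) : ℤ_[p])‖ ≤ (p : ℝ) ^ (-(3 : ℤ)) := this
    _ = ((p : ℝ))⁻¹ ^ 3 := by
      rw [zpow_neg, ← zpow_natCast (((p : ℝ))⁻¹)]
      simp [zpow_natCast]

lemma key_bound (p : ℕ) [Fact p.Prime] (hp : 3 < p)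
    (hjac : (((4 * p).choose (2 * p) : ℕ) : ZMod (p ^ 3)) = 6) :
    ‖((2 * (p : ℤ_[p]) - 1) * (((4 * p).choose (2 * p) : ℕ) : ℤ_[p])
        - 6 * (1 + ((2 : ℤ_[p]) ^ (p - 1) - 1)) ^ 6 *
          ((2 * (p : ℤ_[p]) - 1) * (1 - 6 * ((2 : ℤ_[p]) ^ (p - 1) - 1))
            - 21 * ((2 : ℤ_[p]) ^ (p - 1) - 1) ^ 2))‖ ≤ ((p : ℝ))⁻¹ ^ 3 := by
  set T : ℤ_[p] := (2 : ℤ_[p]) ^ (p - 1) - 1 with hTdef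
  set P : ℤ_[p] := (p : ℤ_[p]) with hPdef
  set Cz : ℤ_[p] := (((4 * p).choose (2 * p) : ℕ) : ℤ_[p]) with hCdef
  have hT : ‖T‖ ≤ ((p : ℝ))⁻¹ := hT_bound p hp
  have hC : ‖Cz - 6‖ ≤ ((p : ℝ))⁻¹ ^ 3 := hC_bound p hp hjac
  have hP : ‖P‖ = ((p : ℝ))⁻¹ := PadicInt.norm_p
  have hident : (2 * P - 1) * Cz - 6 * (1 + T) ^ 6 * ((2 * P - 1) * (1 - 6 * T) - 21 * T ^ 2)
      = (2 * P - 1) * (Cz - 6)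
        + (P * T ^ 2 * (252 + 840 * T + 1260 * T ^ 2 + 1008 * T ^ 3 + 420 * T ^ 4 + 72 * T ^ 5)
          + T ^ 3 * (336 + 1260 * T + 2016 * T ^ 2 + 1680 * T ^ 3 + 720 * T ^ 4 + 126 * T ^ 5)) := by
    ring
  rw [hident]
  have hpinv_pos : (0 : ℝ) ≤ ((p : ℝ))⁻¹ := by positivity
  have hb1 : ‖(2 * P - 1) * (Cz - 6)‖ ≤ ((p : ℝ))⁻¹ ^ 3 := by
    rw [norm_mul]
    calc ‖2 * P - 1‖ * ‖Cz - 6‖ ≤ 1 * (((p : ℝ))⁻¹ ^ 3) :=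
          mul_le_mul (PadicInt.norm_le_one _) hC (norm_nonneg _) zero_le_one
      _ = ((p : ℝ))⁻¹ ^ 3 := one_mul _
  have hb2 : ‖P * T ^ 2 * (252 + 840 * T + 1260 * T ^ 2 + 1008 * T ^ 3 + 420 * T ^ 4 + 72 * T ^ 5)‖
      ≤ ((p : ℝ))⁻¹ ^ 3 := by
    rw [norm_mul, norm_mul, norm_pow]
    calc ‖P‖ * ‖T‖ ^ 2 * ‖(252 + 840 * T + 1260 * T ^ 2 + 1008 * T ^ 3 + 420 * T ^ 4 + 72 * T ^ 5 : ℤ_[p])‖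
        ≤ (((p : ℝ))⁻¹ * ((p : ℝ))⁻¹ ^ 2) * 1 := by
          refine mul_le_mul ?_ (PadicInt.norm_le_one _) (norm_nonneg _) (by positivity)
          exact mul_le_mul (le_of_eq hP) (pow_le_pow_left₀ (norm_nonneg _) hT 2)
            (by positivity) hpinv_pos
      _ = ((p : ℝ))⁻¹ ^ 3 := by ring
  have hb3 : ‖T ^ 3 * (336 + 1260 * T + 2016 * T ^ 2 + 1680 * T ^ 3 + 720 * T ^ 4 + 126 * T ^ 5)‖
      ≤ ((p : ℝ))⁻¹ ^ 3 := by
    rw [norm_mul, norm_pow]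
    calc ‖T‖ ^ 3 * ‖(336 + 1260 * T + 2016 * T ^ 2 + 1680 * T ^ 3 + 720 * T ^ 4 + 126 * T ^ 5 : ℤ_[p])‖
        ≤ (((p : ℝ))⁻¹ ^ 3) * 1 :=
          mul_le_mul (pow_le_pow_left₀ (norm_nonneg _) hT 3) (PadicInt.norm_le_one _)
            (norm_nonneg _) (by positivity)
      _ = ((p : ℝ))⁻¹ ^ 3 := mul_one _
  calc ‖(2 * P - 1) * (Cz - 6) + (P * T ^ 2 * (252 + 840 * T + 1260 * T ^ 2 + 1008 * T ^ 3 + 420 * T ^ 4 + 72 * T ^ 5)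
          + T ^ 3 * (336 + 1260 * T + 2016 * T ^ 2 + 1680 * T ^ 3 + 720 * T ^ 4 + 126 * T ^ 5))‖
      ≤ max ‖(2 * P - 1) * (Cz - 6)‖
          ‖P * T ^ 2 * (252 + 840 * T + 1260 * T ^ 2 + 1008 * T ^ 3 + 420 * T ^ 4 + 72 * T ^ 5)
            + T ^ 3 * (336 + 1260 * T + 2016 * T ^ 2 + 1680 * T ^ 3 + 720 * T ^ 4 + 126 * T ^ 5)‖ :=
        PadicInt.nonarchimedean _ _
    _ ≤ ((p : ℝ))⁻¹ ^ 3 := by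
        refine max_le hb1 ?_
        calc ‖_ + _‖ ≤ max _ _ := PadicInt.nonarchimedean _ _
          _ ≤ ((p : ℝ))⁻¹ ^ 3 := max_le hb2 hb3

lemma ident_gen {K : Type*} [Field K] (u v P C M w X : K)
    (hu : u ≠ 0) (hv : v ≠ 0) (hP : P ≠ 0) (h6 : (6 : K) ≠ 0) (hX : X = u * v) :
    (v / 6 * P * (2 * P - 1) * C / X - w / u * P * M) / P ^ 4
      = ((2 * P - 1) * C - 6 * w * M) * (P / (6 * u * P ^ 4)) := by
  subst hX
  have hP4 : P ^ 4 ≠ 0 := pow_ne_zero 4 hP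
  have huv : u * v ≠ 0 := mul_ne_zero hu hv
  have h6uP : 6 * u * P ^ 4 ≠ 0 := mul_ne_zero (mul_ne_zero h6 hu) hP4
  rw [mul_div_assoc', div_eq_div_iff hP4 h6uP]
  simp only [div_mul_eq_mul_div, div_div]
  rw [div_sub_div _ _ (mul_ne_zero h6 huv) hu, div_mul_eq_mul_div,
    div_eq_iff (mul_ne_zero (mul_ne_zero h6 huv) hu)]
  ring

/-- Fermat quotient `q_p(a) = (a^(p-1) - 1)/p` as a rational number. -/
def fermatQuotient (p a : ℕ) : ℚ := ((a : ℚ) ^ (p - 1) - 1) / (p : ℚ)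

theorem stmt3 (p : ℕ) [Fact p.Prime] (hp : 3 < p)
    (d : ℚ) (hd0 : d ≠ 0) (hdu : ‖(d : ℚ_[p])‖ = 1) :
    ‖((∑ k ∈ Finset.range p,
        (1 + ((16 - (d : ℚ_[p])) / 3) * (k : ℚ_[p]) ^ 2
            + ((32 + (d : ℚ_[p])) / 6) * (k : ℚ_[p])) *
          (((4 * k).choose (2 * k) : ℕ) : ℚ_[p]) / (d : ℚ_[p]) ^ k) -
      ((-64 / d : ℚ) : ℚ_[p]) ^ (p - 1) * (p : ℚ_[p]) *
        ((2 * (p : ℚ_[p]) - 1) * (1 - 6 * (p : ℚ_[p]) * (fermatQuotient p 2 : ℚ_[p]))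
          - 21 * (p : ℚ_[p]) ^ 2 * (fermatQuotient p 2 : ℚ_[p]) ^ 2)) / (p : ℚ_[p]) ^ 4‖ ≤ 1 := by
  have hprime : p.Prime := Fact.out
  set D : ℚ_[p] := (d : ℚ_[p]) with hD
  have hDne : D ≠ 0 := by
    intro h
    rw [h, norm_zero] at hdu
    norm_num at hdu
  have hp0 : (p : ℚ_[p]) ≠ 0 := Nat.cast_ne_zero.2 (by omega)
  -- telescoping the sum
  have hsum : (∑ k ∈ Finset.range p,
        (1 + ((16 - D) / 3) * (k : ℚ_[p]) ^ 2 + ((32 + D) / 6) * (k : ℚ_[p])) *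
          (((4 * k).choose (2 * k) : ℕ) : ℚ_[p]) / D ^ k)
      = D / 6 * ((p : ℕ) : ℚ_[p]) * (2 * ((p : ℕ) : ℚ_[p]) - 1) *
          (((4 * p).choose (2 * p) : ℕ) : ℚ_[p]) / D ^ p := by
    have h0 := Finset.sum_range_sub (f := fun n : ℕ =>
      D / 6 * ((n : ℕ) : ℚ_[p]) * (2 * ((n : ℕ) : ℚ_[p]) - 1) *
        (((4 * n).choose (2 * n) : ℕ) : ℚ_[p]) / D ^ n) p
    rw [← Finset.sum_congr rfl (fun k _ => (Gstep ℚ_[p] D hDne k)), h0]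
    norm_num
  -- Fermat quotient
  have hq : (p : ℚ_[p]) * ((fermatQuotient p 2 : ℚ) : ℚ_[p]) = (2 : ℚ_[p]) ^ (p - 1) - 1 := by
    rw [fermatQuotient]
    push_cast
    field_simp
  set t : ℚ_[p] := (2 : ℚ_[p]) ^ (p - 1) - 1 with ht
  have heven : Even (p - 1) := Nat.Odd.sub_odd (hprime.odd_of_ne_two (by omega)) odd_one
  have hpow : ((-64 / d : ℚ) : ℚ_[p]) ^ (p - 1) = (1 + t) ^ 6 / D ^ (p - 1) := by
    have h1 : ((-64 / d : ℚ) : ℚ_[p]) = -(64 / D) := by push_cast; ring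
    rw [h1, heven.neg_pow, div_pow]
    congr 1
    rw [show (64 : ℚ_[p]) = 2 ^ 6 by norm_num, ← pow_mul, mul_comm, pow_mul]
    rw [show (1 : ℚ_[p]) + t = 2 ^ (p - 1) by rw [ht]; ring]
  -- the key bound, transferred to ℚ_[p]
  have hkey : ‖((2 * (p : ℚ_[p]) - 1) * (((4 * p).choose (2 * p) : ℕ) : ℚ_[p])
      - 6 * (1 + t) ^ 6 * ((2 * (p : ℚ_[p]) - 1) * (1 - 6 * t) - 21 * t ^ 2))‖
      ≤ ((p : ℝ))⁻¹ ^ 3 := by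
    have hk := key_bound p hp (jacobsthal p hp)
    rw [PadicInt.norm_def] at hk
    push_cast at hk
    convert hk using 3 <;> push_cast [ht] <;> rfl
  -- rewrite the Fermat quotient terms
  have h6q : 6 * (p : ℚ_[p]) * ((fermatQuotient p 2 : ℚ) : ℚ_[p]) = 6 * t := by
    rw [← hq]; ring
  have h21 : 21 * (p : ℚ_[p]) ^ 2 * ((fermatQuotient p 2 : ℚ) : ℚ_[p]) ^ 2 = 21 * t ^ 2 := by
    rw [← hq]; ring
  rw [hsum, hpow, h6q, h21]
  -- algebraic identity
  have hDp : D ^ p = D ^ (p - 1) * D := by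
    rw [← pow_succ, show p - 1 + 1 = p by omega]
  have hDppne : D ^ (p - 1) ≠ 0 := pow_ne_zero _ hDne
  set Cq : ℚ_[p] := (((4 * p).choose (2 * p) : ℕ) : ℚ_[p]) with hCq
  rw [ident_gen (D ^ (p - 1)) D ((p : ℚ_[p])) Cq
      ((2 * (p : ℚ_[p]) - 1) * (1 - 6 * t) - 21 * t ^ 2) ((1 + t) ^ 6) (D ^ p)
      hDppne hDne hp0 (by norm_num : (6 : ℚ_[p]) ≠ 0) hDp]
  -- norms
  have hppos : (0 : ℝ) < (p : ℝ) := by positivity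
  have h6norm : ‖(6 : ℚ_[p])‖ = 1 := by
    have hle : ‖(6 : ℚ_[p])‖ ≤ 1 := by
      have := Padic.norm_int_le_one (p := p) 6
      simpa using this
    rcases lt_or_eq_of_le hle with hlt | heq
    · exfalso
      have h2 : ‖((6 : ℤ) : ℚ_[p])‖ < 1 := by simpa using hlt
      rw [Padic.norm_intCast_lt_one_iff] at h2
      have h3 : p ∣ 6 := by exact_mod_cast h2
      have h4 := Nat.le_of_dvd (by norm_num) h3
      interval_cases p
      · omega
      · omega
      · exact absurd hprime (by norm_num)
    · exact heq
  rw [norm_mul, norm_div, norm_mul, norm_mul, norm_pow, norm_pow, h6norm, hdu,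
    Padic.norm_p]
  have hclean : ((p : ℝ))⁻¹ / (1 * 1 ^ (p - 1) * ((p : ℝ))⁻¹ ^ 4) = (p : ℝ) ^ 3 := by
    rw [one_pow, one_mul]
    field_simp
  rw [hclean]
  calc ‖(2 * (p : ℚ_[p]) - 1) * Cq
        - 6 * (1 + t) ^ 6 * ((2 * (p : ℚ_[p]) - 1) * (1 - 6 * t) - 21 * t ^ 2)‖ * (p : ℝ) ^ 3
      ≤ ((p : ℝ))⁻¹ ^ 3 * (p : ℝ) ^ 3 := by
        exact mul_le_mul_of_nonneg_right hkey (by positivity)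
    _ = 1 := by field_simp
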